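/- Let A be a matrix with Moore-Penrose pseudoinverse A†, and suppose c ∈ range(A) with c = A·k for k = A†·c, and assume 1 + dᵀ·A†·c ≠ 0 and d ∈ range(Aᵀ). Then (A + c·dᵀ)† = A† − (A†·c·dᵀ·A†)/(1 + dᵀ·A†·c), i.e., this formula satisfies the four Moore-Penrose conditions for A + c·dᵀ. -/

import Mathlib

open Matrix

def IsMPInv {n m : ℕ} (A : Matrix (Fin n) (Fin m) ℝ) (B : Matrix (Fin m) (Fin n) ℝ) : Prop :=
  A * B * A = A ∧ B * A * B = B ∧ (A * B)ᵀ = A * B ∧ (B * A)ᵀ = B * A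

lemma mul_vMv {n m p : ℕ} (M : Matrix (Fin p) (Fin n) ℝ) (c : Fin n → ℝ) (d : Fin m → ℝ) :
    M * Matrix.vecMulVec c d = Matrix.vecMulVec (M.mulVec c) d := by
  ext i j
  simp [Matrix.mul_apply, Matrix.vecMulVec_apply, Matrix.mulVec, dotProduct,
    Finset.sum_mul, mul_assoc]

lemma vMv_mul {n m p : ℕ} (M : Matrix (Fin m) (Fin p) ℝ) (c : Fin n → ℝ) (d : Fin m → ℝ) :
    Matrix.vecMulVec c d * M = Matrix.vecMulVec c (Matrix.vecMul d M) := by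
  ext i j
  simp [Matrix.mul_apply, Matrix.vecMulVec_apply, Matrix.vecMul, dotProduct,
    Finset.mul_sum, mul_assoc]

lemma vMv_smul {n m p : ℕ} (c : Fin n → ℝ) (d : Fin m → ℝ) (c' : Fin m → ℝ) (d' : Fin p → ℝ) :
    Matrix.vecMulVec c d * Matrix.vecMulVec c' d' = (d ⬝ᵥ c') • Matrix.vecMulVec c d' := by
  ext i j
  simp only [Matrix.mul_apply, Matrix.vecMulVec_apply, Matrix.smul_apply, dotProduct,
    smul_eq_mul, Finset.sum_mul, Finset.mul_sum]
  exact Finset.sum_congr rfl fun k _ => by ring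

theorem stmt_19 {n m : ℕ} (A : Matrix (Fin n) (Fin m) ℝ) (Ad : Matrix (Fin m) (Fin n) ℝ)
    (hA : IsMPInv A Ad) (c : Fin n → ℝ) (d : Fin m → ℝ)
    (hc : (A * Ad).mulVec c = c)          -- c ∈ range(A)
    (hd : (Ad * A).mulVec d = d)          -- d ∈ range(Aᵀ)
    (hβ : 1 + d ⬝ᵥ Ad.mulVec c ≠ 0) :
    IsMPInv (A + Matrix.vecMulVec c d)
      (Ad - (1 + d ⬝ᵥ Ad.mulVec c)⁻¹ • (Ad * Matrix.vecMulVec c d * Ad)) := by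
  obtain ⟨h1, h2, h3, h4⟩ := hA
  set β := 1 + d ⬝ᵥ Ad.mulVec c with hβdef
  set V := Matrix.vecMulVec c d with hV
  set B := Ad - β⁻¹ • (Ad * V * Ad) with hB
  have hAAdV : A * Ad * V = V := by
    rw [hV, mul_vMv, hc]
  have hVAdA : V * (Ad * A) = V := by
    rw [hV, vMv_mul]
    rw [← Matrix.mulVec_transpose, h4, hd]
  have hVAdV : V * Ad * V = (β - 1) • V := by
    rw [hV, Matrix.mul_assoc, mul_vMv, vMv_smul]
    congr 1
    simp [hβdef]
  have hcoef : β⁻¹ + β⁻¹ * (β - 1) = 1 := by field_simp; ring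
  have L1 : (A + V) * B = A * Ad := by
    have e1 : A * (Ad * V * Ad) = V * Ad := by
      rw [← Matrix.mul_assoc, ← Matrix.mul_assoc, hAAdV]
    have e2 : V * (Ad * V * Ad) = (β - 1) • (V * Ad) := by
      rw [← Matrix.mul_assoc, ← Matrix.mul_assoc, hVAdV, Matrix.smul_mul]
    calc (A + V) * B
        = A * Ad + V * Ad - β⁻¹ • (A * (Ad * V * Ad)) - β⁻¹ • (V * (Ad * V * Ad)) := by
          rw [hB, Matrix.add_mul, Matrix.mul_sub, Matrix.mul_sub, Matrix.mul_smul,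
            Matrix.mul_smul]
          abel
      _ = A * Ad + V * Ad - β⁻¹ • (V * Ad) - (β⁻¹ * (β - 1)) • (V * Ad) := by
          rw [e1, e2, smul_smul]
      _ = A * Ad := by
          rw [sub_sub, ← add_smul, hcoef, one_smul, add_sub_cancel_right]
  have L2 : B * (A + V) = Ad * A := by
    have e1 : Ad * V * Ad * A = Ad * V := by
      rw [Matrix.mul_assoc, Matrix.mul_assoc, hVAdA]
    have e2 : Ad * V * Ad * V = (β - 1) • (Ad * V) := by
      rw [Matrix.mul_assoc Ad V Ad, Matrix.mul_assoc Ad (V * Ad) V,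
        hVAdV, Matrix.mul_smul]
    calc B * (A + V)
        = Ad * A + Ad * V - β⁻¹ • (Ad * V * Ad * A) - β⁻¹ • (Ad * V * Ad * V) := by
          rw [hB, Matrix.mul_add, Matrix.sub_mul, Matrix.sub_mul, Matrix.smul_mul,
            Matrix.smul_mul]
          abel
      _ = Ad * A + Ad * V - β⁻¹ • (Ad * V) - (β⁻¹ * (β - 1)) • (Ad * V) := by
          rw [e1, e2, smul_smul]
      _ = Ad * A := by
          rw [sub_sub, ← add_smul, hcoef, one_smul, add_sub_cancel_right]
  refine ⟨?_, ?_, ?_, ?_⟩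
  · rw [L1, Matrix.mul_add, h1, hAAdV]
  · rw [L2, hB, Matrix.mul_sub, h2, Matrix.mul_smul, ← Matrix.mul_assoc, ← Matrix.mul_assoc, h2]
  · rw [L1, h3]
  · rw [L2, h4]
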